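/- Let W be a variety and A an Ω-algebra of the same similarity type as the algebras in W. Define the binary relation ϱ⁰ on A by: (a,b) ∈ ϱ⁰ if and only if there exist an identity p(x₁,…,x_n) = q(x₁,…,x_n) true in W and elements d₁,…,d_n ∈ A such that a = p(d₁,…,d_n) and b = q(d₁,…,d_n). Then the W-replica congruence ϱ of A coincides with the transitive closure tr(ϱ⁰) of ϱ⁰. -/

import Mathlib

structure Signature where
  symbols : Type
  arity : symbols → ℕ

structure Alg (S : Signature) where
  carrier : Type
  op : ∀ ω : S.symbols, (Fin (S.arity ω) → carrier) → carrier
  nonempty : Nonempty carrier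

inductive Term (S : Signature) (X : Type) : Type
  | var : X → Term S X
  | app : ∀ ω : S.symbols, (Fin (S.arity ω) → Term S X) → Term S X

def Term.eval {S : Signature} {X : Type} (A : Alg S) (env : X → A.carrier) :
    Term S X → A.carrier
  | .var x => env x
  | .app ω ts => A.op ω fun i => (ts i).eval A env

/-- The algebra `A` satisfies the identity `u = v`. -/
def Alg.sat {S : Signature} (A : Alg S) {X : Type} (u v : Term S X) : Prop :=
  ∀ env : X → A.carrier, u.eval A env = v.eval A env

/-- An identity: a pair of terms in the countably many variables `x₀, x₁, …`. -/
abbrev Ident (S : Signature) := Term S ℕ × Term S ℕ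

/-- `A` lies in the variety axiomatized by the set of identities `E`. -/
def Alg.Models {S : Signature} (A : Alg S) (E : Set (Ident S)) : Prop :=
  ∀ e ∈ E, A.sat e.1 e.2

/-- The identity `u = v` holds in the variety axiomatized by `E`. -/
def Conseq {S : Signature} (E : Set (Ident S)) {X : Type} (u v : Term S X) : Prop :=
  ∀ A : Alg S, A.Models E → A.sat u v

/-- `a` is an idempotent element of `A`. -/
def Alg.IsIdem {S : Signature} (A : Alg S) (a : A.carrier) : Prop :=
  ∀ ω : S.symbols, A.op ω (fun _ => a) = a

/-- `B` is (the universe of) a subalgebra of `A`. -/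
def Alg.IsSubuniverse {S : Signature} (A : Alg S) (B : Set A.carrier) : Prop :=
  ∀ ω (a : Fin (S.arity ω) → A.carrier), (∀ i, a i ∈ B) → A.op ω a ∈ B

/-- The subalgebra of `A` on a nonempty subuniverse `B`. -/
def Alg.subAlg {S : Signature} (A : Alg S) (B : Set A.carrier)
    (h : A.IsSubuniverse B) (hne : B.Nonempty) : Alg S where
  carrier := B
  op ω a := ⟨A.op ω fun i => (a i : A.carrier), h ω _ fun i => (a i).2⟩
  nonempty := hne.to_subtype

/-- A congruence of `A`: an equivalence relation compatible with all operations. -/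
structure Congruence {S : Signature} (A : Alg S) where
  rel : A.carrier → A.carrier → Prop
  iseqv : Equivalence rel
  compat : ∀ ω (a b : Fin (S.arity ω) → A.carrier),
    (∀ i, rel (a i) (b i)) → rel (A.op ω a) (A.op ω b)

def Congruence.setoid {S : Signature} {A : Alg S} (θ : Congruence A) :
    Setoid A.carrier := ⟨θ.rel, θ.iseqv⟩

/-- The quotient algebra `A/θ`. -/
noncomputable def Alg.quot {S : Signature} (A : Alg S) (θ : Congruence A) : Alg S where
  carrier := Quotient θ.setoid
  op ω q := Quotient.mk θ.setoid (A.op ω fun i => (q i).out)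
  nonempty := A.nonempty.map (Quotient.mk θ.setoid)

/-- Membership in the Mal'tsev product of the varieties axiomatized by `V` and `W`:
`A` has a congruence `θ` with `A/θ` in (the variety of) `W` such that every
`θ`-class which is a subalgebra of `A` is an algebra in (the variety of) `V`. -/
def InMaltsev {S : Signature} (V W : Set (Ident S)) (A : Alg S) : Prop :=
  ∃ θ : Congruence A, (A.quot θ).Models W ∧
    ∀ a : A.carrier, ∀ h : A.IsSubuniverse {b | θ.rel a b},
      (A.subAlg {b | θ.rel a b} h ⟨a, θ.iseqv.refl a⟩).Models V

/-- A class of algebras is a variety iff it is axiomatized by some set of identities. -/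
def IsVarietyClass {S : Signature} (K : Alg S → Prop) : Prop :=
  ∃ E : Set (Ident S), ∀ A : Alg S, K A ↔ A.Models E

/-- The relation `ϱ⁰`: `(a, b) ∈ ϱ⁰` iff there are an identity `p = q` true in
the variety axiomatized by `W` and elements `d₁, d₂, …` of `A` such that
`a = p(d₁,…,dₙ)` and `b = q(d₁,…,dₙ)`. -/
def rho0 {S : Signature} (W : Set (Ident S)) (A : Alg S)
    (a b : A.carrier) : Prop :=
  ∃ (p q : Term S ℕ) (d : ℕ → A.carrier),
    Conseq W p q ∧ a = p.eval A d ∧ b = q.eval A d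

def Term.rename {S : Signature} {X Y : Type} (f : X → Y) : Term S X → Term S Y
  | .var x => .var (f x)
  | .app ω ts => .app ω fun i => (ts i).rename f

lemma Term.eval_rename {S : Signature} {X Y : Type} (A : Alg S) (f : X → Y)
    (env : Y → A.carrier) (t : Term S X) :
    (t.rename f).eval A env = t.eval A (env ∘ f) := by
  induction t with
  | var x => rfl
  | app ω ts ih => simp only [Term.rename, Term.eval]; exact congrArg _ (funext fun i => ih i)

lemma eval_quot {S : Signature} {X : Type} (A : Alg S) (θ : Congruence A)
    (d : X → A.carrier) (t : Term S X) :
    Quotient.mk θ.setoid (t.eval A d)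
      = t.eval (A.quot θ) (fun k => Quotient.mk θ.setoid (d k)) := by
  induction t with
  | var x => rfl
  | app ω ts ih =>
    show _ = Quotient.mk θ.setoid (A.op ω _)
    refine Quotient.sound (θ.compat ω _ _ fun i => ?_)
    have := ih i
    have h2 : θ.setoid.r (((ts i).eval (A.quot θ)
        (fun k => Quotient.mk θ.setoid (d k))).out) ((ts i).eval A d) := by
      rw [← this]; exact Quotient.mk_out _
    exact θ.iseqv.symm h2

lemma rho0_refl {S : Signature} (W : Set (Ident S)) (A : Alg S) (a : A.carrier) :
    rho0 W A a a :=
  ⟨.var 0, .var 0, fun _ => a, fun _ _ _ => rfl, rfl, rfl⟩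

lemma rho0_symm {S : Signature} {W : Set (Ident S)} {A : Alg S} {a b : A.carrier}
    (h : rho0 W A a b) : rho0 W A b a := by
  obtain ⟨p, q, d, hpq, ha, hb⟩ := h
  exact ⟨q, p, d, fun B hB env => (hpq B hB env).symm, hb, ha⟩

lemma rho0_update {S : Signature} (W : Set (Ident S)) (A : Alg S)
    (ω : S.symbols) (c : Fin (S.arity ω) → A.carrier) (i : Fin (S.arity ω))
    {x y : A.carrier} (h : rho0 W A x y) :
    rho0 W A (A.op ω (Function.update c i x)) (A.op ω (Function.update c i y)) := by
  obtain ⟨p, q, d, hpq, hx, hy⟩ := h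
  refine ⟨Term.app ω (fun j => if j = i then p.rename (· + S.arity ω) else .var (j : ℕ)),
    Term.app ω (fun j => if j = i then q.rename (· + S.arity ω) else .var (j : ℕ)),
    fun k => if hk : k < S.arity ω then c ⟨k, hk⟩ else d (k - S.arity ω), ?_, ?_, ?_⟩
  · intro B hB env
    show B.op ω _ = B.op ω _
    refine congrArg _ (funext fun j => ?_)
    beta_reduce
    by_cases hj : j = i
    · subst hj
      rw [if_pos rfl, if_pos rfl, Term.eval_rename, Term.eval_rename]
      exact hpq B hB _
    · rw [if_neg hj, if_neg hj]
  · show _ = A.op ω _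
    refine congrArg _ (funext fun j => ?_)
    beta_reduce
    by_cases hj : j = i
    · subst hj
      rw [if_pos rfl, Function.update_self, Term.eval_rename, hx]
      have hde : ((fun k => if hk : k < S.arity ω then c ⟨k, hk⟩ else d (k - S.arity ω))
          ∘ fun x => x + S.arity ω) = d := by
        funext k
        show (if hk : k + S.arity ω < S.arity ω then _
          else d (k + S.arity ω - S.arity ω)) = d k
        rw [dif_neg (by omega)]
        congr 1
        omega
      rw [hde]
    · rw [if_neg hj, Function.update_of_ne hj]
      show c j = (if hk : (j : ℕ) < S.arity ω then c ⟨(j : ℕ), hk⟩ else _)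
      rw [dif_pos j.isLt]
  · show _ = A.op ω _
    refine congrArg _ (funext fun j => ?_)
    beta_reduce
    by_cases hj : j = i
    · subst hj
      rw [if_pos rfl, Function.update_self, Term.eval_rename, hy]
      have hde : ((fun k => if hk : k < S.arity ω then c ⟨k, hk⟩ else d (k - S.arity ω))
          ∘ fun x => x + S.arity ω) = d := by
        funext k
        show (if hk : k + S.arity ω < S.arity ω then _
          else d (k + S.arity ω - S.arity ω)) = d k
        rw [dif_neg (by omega)]
        congr 1
        omega
      rw [hde]
    · rw [if_neg hj, Function.update_of_ne hj]
      show c j = (if hk : (j : ℕ) < S.arity ω then c ⟨(j : ℕ), hk⟩ else _)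
      rw [dif_pos j.isLt]

/-- The transitive closure of `ϱ⁰` is a congruence. -/
noncomputable def rhoCong {S : Signature} (W : Set (Ident S)) (A : Alg S) :
    Congruence A where
  rel := Relation.TransGen (rho0 W A)
  iseqv := by
    refine ⟨fun a => Relation.TransGen.single (rho0_refl W A a), ?_, fun h h' => h.trans h'⟩
    · intro a b h
      induction h with
      | single h => exact Relation.TransGen.single (rho0_symm h)
      | tail _ h ih => exact (Relation.TransGen.single (rho0_symm h)).trans ih
  compat := by
    intro ω a b hab
    have key : ∀ k : ℕ, k ≤ S.arity ω →
        Relation.TransGen (rho0 W A) (A.op ω a)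
          (A.op ω fun j => if (j : ℕ) < k then b j else a j) := by
      intro k
      induction k with
      | zero =>
        intro _
        have : (fun j : Fin (S.arity ω) => if (j : ℕ) < 0 then b j else a j) = a := by
          funext j; simp
        rw [this]
        exact Relation.TransGen.single (rho0_refl W A _)
      | succ k ih =>
        intro hk
        have ih' := ih (by omega)
        refine ih'.trans ?_
        have step := Relation.TransGen.lift
          (fun z => A.op ω (Function.update
            (fun j : Fin (S.arity ω) => if (j : ℕ) < k then b j else a j) ⟨k, by omega⟩ z))
          (fun x y h => rho0_update W A ω _ _ h) _ _ (hab ⟨k, by omega⟩)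
        have h1 : Function.update
            (fun j : Fin (S.arity ω) => if (j : ℕ) < k then b j else a j)
            ⟨k, by omega⟩ (a ⟨k, by omega⟩)
            = fun j : Fin (S.arity ω) => if (j : ℕ) < k then b j else a j := by
          funext j
          by_cases hj : j = (⟨k, by omega⟩ : Fin (S.arity ω))
          · subst hj
            rw [Function.update_self]
            show a _ = if k < k then _ else _
            rw [if_neg (by omega)]
          · rw [Function.update_of_ne hj]
        have h2 : Function.update
            (fun j : Fin (S.arity ω) => if (j : ℕ) < k then b j else a j)
            ⟨k, by omega⟩ (b ⟨k, by omega⟩)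
            = fun j : Fin (S.arity ω) => if (j : ℕ) < k + 1 then b j else a j := by
          funext j
          by_cases hj : j = (⟨k, by omega⟩ : Fin (S.arity ω))
          · subst hj
            rw [Function.update_self]
            show b _ = if k < k + 1 then _ else _
            rw [if_pos (by omega)]
          · rw [Function.update_of_ne hj]
            show (if (j : ℕ) < k then b j else a j) = (if (j : ℕ) < k + 1 then b j else a j)
            have hne : (j : ℕ) ≠ k := fun h => hj (Fin.ext h)
            by_cases hjk : (j : ℕ) < k
            · rw [if_pos hjk, if_pos (by omega)]
            · rw [if_neg hjk, if_neg (by omega)]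
        unfold Function.onFun at step
        beta_reduce at step
        rw [h1, h2] at step
        exact step
    have := key (S.arity ω) le_rfl
    have heq : (fun j : Fin (S.arity ω) => if (j : ℕ) < S.arity ω then b j else a j) = b := by
      funext j; rw [if_pos j.isLt]
    rwa [heq] at this

lemma rhoCong_rel {S : Signature} (W : Set (Ident S)) (A : Alg S) :
    (rhoCong W A).rel = Relation.TransGen (rho0 W A) := rfl

lemma quot_rhoCong_models {S : Signature} (W : Set (Ident S)) (A : Alg S) :
    (A.quot (rhoCong W A)).Models W := by
  intro e he env
  have henv : (fun k => Quotient.mk (rhoCong W A).setoid ((env k).out)) = env := by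
    funext k
    exact Quotient.out_eq _
  have h1 := eval_quot A (rhoCong W A) (fun k => (env k).out) e.1
  have h2 := eval_quot A (rhoCong W A) (fun k => (env k).out) e.2
  rw [henv] at h1 h2
  rw [← h1, ← h2]
  exact Quotient.sound (Relation.TransGen.single
    ⟨e.1, e.2, fun k => (env k).out, fun B hB => hB e he, rfl, rfl⟩)

/-- The `W`-replica congruence of `A` (the intersection of all
congruences `θ` of `A` with `A/θ ∈ W`) coincides with the transitive closure of
`ϱ⁰`. -/
theorem stmt_10 (S : Signature) (h0 : ∀ ω : S.symbols, 0 < S.arity ω)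
    (W : Set (Ident S)) (A : Alg S) (a b : A.carrier) :
    (∀ θ : Congruence A, (A.quot θ).Models W → θ.rel a b) ↔
      Relation.TransGen (rho0 W A) a b := by
  constructor
  · intro h
    have := h (rhoCong W A) (quot_rhoCong_models W A)
    rwa [rhoCong_rel] at this
  · intro h θ hθ
    induction h with
    | single h =>
      obtain ⟨p, q, d, hpq, ha, hb⟩ := h
      have h1 := eval_quot A θ d p
      have h2 := eval_quot A θ d q
      have := hpq (A.quot θ) hθ (fun k => Quotient.mk θ.setoid (d k))
      rw [← h1, ← h2] at this
      rw [ha, hb]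
      exact Quotient.exact this
    | tail _ h ih =>
      obtain ⟨p, q, d, hpq, ha, hb⟩ := h
      have h1 := eval_quot A θ d p
      have h2 := eval_quot A θ d q
      have := hpq (A.quot θ) hθ (fun k => Quotient.mk θ.setoid (d k))
      rw [← h1, ← h2] at this
      refine θ.iseqv.trans ih ?_
      rw [ha, hb]
      exact Quotient.exact this
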